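/- Let V be a finite-dimensional vector space over a field F, L a linear subspace of End(V), and e ∈ L an idempotent (e∘e = e) whose rank is maximal among all elements of L. If L is spanned (as an F-subspace) by e together with some set of rank-one linear maps, then for every finite product h₁h₂⋯hₛ of elements of L and every v ∈ ker e, the vector h₁h₂⋯hₛ v lies in the image of e. -/

import Mathlib

open Module LinearMap

lemma exists_rank_one {F V : Type*} [Field F] [AddCommGroup V] [Module F V]
    [FiniteDimensional F V] (f : V →ₗ[F] V)
    (h : finrank F (LinearMap.range f) = 1) :
    ∃ (u : V) (ψ : V →ₗ[F] F), u ≠ 0 ∧ ∀ x, f x = ψ x • u := by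
  let b : Basis (Fin 1) F (LinearMap.range f) := Module.finBasisOfFinrankEq F _ h
  refine ⟨(b 0 : V), (b.coord 0).comp (f.rangeRestrict), ?_, ?_⟩
  · simpa using b.ne_zero 0
  · intro x
    have h1 := b.sum_repr (f.rangeRestrict x)
    rw [Fin.sum_univ_one] at h1
    have h2 : ((f.rangeRestrict x : LinearMap.range f) : V)
        = (b.repr (f.rangeRestrict x) 0) • ((b 0 : LinearMap.range f) : V) := by
      rw [← h1]; simp
    simpa using h2

lemma no_chain {F V : Type*} [Field F] [AddCommGroup V] [Module F V] [FiniteDimensional F V]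
    (L : Submodule F (V →ₗ[F] V)) (e : V →ₗ[F] V) (he : e ∈ L) (hid : e ∘ₗ e = e)
    (hmax : ∀ h ∈ L, finrank F (LinearMap.range h) ≤ finrank F (LinearMap.range e))
    (S : Set (V →ₗ[F] V)) (hS1 : ∀ f ∈ S, finrank F (LinearMap.range f) = 1)
    (hSL : S ⊆ (L : Set (V →ₗ[F] V))) :
    ∀ k : ℕ, ∀ c : ℕ → (V →ₗ[F] V), (∀ i ≤ k, c i ∈ S) →
      (∀ i < k, c i ∘ₗ c (i+1) ≠ 0) → ∀ v, e v = 0 → c k v ≠ 0 →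
      LinearMap.range (c 0) ≤ LinearMap.range e := by
  intro k
  induction k using Nat.strong_induction_on with
  | _ k IH =>
  intro c hc hcons v hv hcv
  by_contra hbad
  -- decompositions
  have hdec : ∀ i, ∃ (u : V) (ψ : V →ₗ[F] F), i ≤ k → (u ≠ 0 ∧ ∀ x, c i x = ψ x • u) := by
    intro i
    by_cases hi : i ≤ k
    · obtain ⟨u, ψ, hu, hfx⟩ := exists_rank_one (c i) (hS1 _ (hc i hi))
      exact ⟨u, ψ, fun _ => ⟨hu, hfx⟩⟩
    · exact ⟨0, 0, fun h => absurd h hi⟩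
  choose u ψ hdec using hdec
  have hu0 : ∀ i, i ≤ k → u i ≠ 0 := fun i hi => (hdec i hi).1
  have happ : ∀ i, i ≤ k → ∀ x, c i x = ψ i x • u i := fun i hi => (hdec i hi).2
  have hfix : ∀ x ∈ LinearMap.range e, e x = x := by
    rintro x ⟨y, rfl⟩
    have := LinearMap.ext_iff.mp hid y
    simpa using this
  have humem : ∀ i, i ≤ k → u i ∈ LinearMap.range (c i) := by
    intro i hi
    have hcne : c i ≠ 0 := by
      intro h0
      have h1 := hS1 _ (hc i hi)
      rw [h0, LinearMap.range_zero] at h1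
      rw [finrank_bot] at h1
      exact absurd h1 (by norm_num)
    obtain ⟨x, hx⟩ : ∃ x, c i x ≠ 0 := by
      by_contra hax
      push_neg at hax
      exact hcne (LinearMap.ext fun x => by simp [hax])
    have hpsi : ψ i x ≠ 0 := by
      intro h; rw [happ i hi x, h, zero_smul] at hx; exact hx rfl
    refine ⟨(ψ i x)⁻¹ • x, ?_⟩
    rw [map_smul, happ i hi x, smul_smul, inv_mul_cancel₀ hpsi, one_smul]
  -- shifted chains
  have hshift : ∀ i, 0 < i → i ≤ k → LinearMap.range (c i) ≤ LinearMap.range e := by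
    intro i h0 hik
    have h1 := IH (k - i) (by omega) (fun n => c (n + i))
      (fun n hn => hc (n + i) (by omega))
      (fun n hn => by
        have h2 := hcons (n + i) (by omega)
        have h3 : n + 1 + i = n + i + 1 := by omega
        simpa [h3] using h2)
      v hv (by
        have h4 : k - i + i = k := by omega
        simpa [h4] using hcv)
    simpa using h1
  have hgood : ∀ i, 0 < i → i ≤ k → e (u i) = u i :=
    fun i h0 hik => hfix _ (hshift i h0 hik (humem i hik))
  -- truncation
  have hKzero : ∀ i, i < k → ∀ w, e w = 0 → c i w = 0 := by
    intro i hik w hw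
    by_contra hne
    exact hbad (IH i (by omega) c (fun j hj => hc j (by omega))
      (fun j hj => hcons j (by omega)) w hw hne)
  -- skipping
  have hskip : ∀ i j, i + 2 ≤ j → j ≤ k → c i ∘ₗ c j = 0 := by
    intro i j hij hjk
    by_contra hne
    apply hbad
    set m := j - i - 1 with hm
    have hm1 : 1 ≤ m := by omega
    have key' := IH (k - m) (by omega) (fun n => if n ≤ i then c n else c (n + m)) ?_ ?_ v hv ?_
    · simpa using key'
    · intro n hn
      try dsimp only
      by_cases h : n ≤ i
      · simpa [h] using hc n (by omega)
      · simpa [h] using hc (n + m) (by omega)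
    · intro n hn
      try dsimp only
      by_cases h1 : n + 1 ≤ i
      · have h2 : n ≤ i := by omega
        simpa [h1, h2] using hcons n (by omega)
      · by_cases h2 : n ≤ i
        · have hn' : n = i := by omega
          have h3 : n + 1 + m = j := by omega
          rw [if_pos h2, if_neg h1, h3, hn']
          exact hne
        · have h3 : ¬ (n + 1 ≤ i) := h1
          have h4 : n + 1 + m = n + m + 1 := by omega
          simp only [if_neg h2, if_neg h3, h4]
          exact hcons (n + m) (by omega)
    · have h5 : ¬ (k - m ≤ i) := by omega
      have h6 : k - m + m = k := by omega
      try dsimp only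
      rw [if_neg h5, h6]
      exact hcv
  -- scalar facts
  have hs_ne : ∀ i, i < k → ψ i (u (i + 1)) ≠ 0 := by
    intro i hik h0
    apply hcons i hik
    apply LinearMap.ext
    intro x
    rw [LinearMap.comp_apply, happ (i + 1) (by omega) x, map_smul,
      happ i (by omega) (u (i + 1)), h0, zero_smul, smul_zero]
    simp
  have hskipψ : ∀ i j, i + 2 ≤ j → j ≤ k → ψ i (u j) = 0 := by
    intro i j h1 h2
    obtain ⟨x, hx⟩ := humem j h2
    have h3 : c i (c j x) = 0 := by
      rw [← LinearMap.comp_apply, hskip i j h1 h2]; simp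
    rw [hx, happ i (by omega) (u j)] at h3
    rcases smul_eq_zero.mp h3 with h | h
    · exact h
    · exact absurd h (hu0 i (by omega))
  have hKψ : ∀ i, i < k → ∀ w, e w = 0 → ψ i w = 0 := by
    intro i hik w hw
    have h1 := hKzero i hik w hw
    rw [happ i (by omega) w] at h1
    rcases smul_eq_zero.mp h1 with h | h
    · exact h
    · exact absurd h (hu0 i (by omega))
  have hbadu : e (u 0) ≠ u 0 := by
    intro hcontra
    apply hbad
    rintro y ⟨x, rfl⟩
    rw [happ 0 (Nat.zero_le k) x]
    exact Submodule.smul_mem _ _ ⟨u 0, hcontra⟩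
  -- the big element T
  set T : V →ₗ[F] V := e + ∑ i ∈ Finset.range (k + 1), c i with hT
  have hTL : T ∈ L := by
    apply Submodule.add_mem _ he
    apply Submodule.sum_mem
    intro i hi
    exact hSL (hc i (by simpa [Nat.lt_succ_iff] using hi))
  have hTapp : ∀ x, T x = e x + ∑ i ∈ Finset.range (k + 1), ψ i x • u i := by
    intro x
    rw [hT]
    simp only [LinearMap.add_apply, LinearMap.sum_apply, Finset.sum_apply]
    congr 1
    refine Finset.sum_congr rfl fun i hi => happ i (by simpa [Nat.lt_succ_iff] using hi) x
  -- the key injectivity computation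
  have key : ∀ (x : V) (a : F), e x = x → T x = a • u k → x = 0 ∧ a = 0 := by
    intro x a hex hTx
    set d : ℕ → F := fun i => ψ i x with hd
    have star : x + ∑ i ∈ Finset.range (k + 1), d i • u i = a • u k := by
      rw [← hTx, hTapp x, hex]
    have star_e : x + ∑ i ∈ Finset.range (k + 1), d i • e (u i) = a • e (u k) := by
      have h1 := congrArg e star
      simpa [map_add, map_sum, map_smul, hex] using h1
    have sub0 : d 0 • (u 0 - e (u 0)) = a • (u k - e (u k)) := by
      have h2 : (x + ∑ i ∈ Finset.range (k + 1), d i • u i)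
          - (x + ∑ i ∈ Finset.range (k + 1), d i • e (u i))
          = a • u k - a • e (u k) := by rw [star, star_e]
      have h3 : ∑ i ∈ Finset.range (k + 1), d i • (u i - e (u i))
          = a • (u k - e (u k)) := by
        have h4 : ∑ i ∈ Finset.range (k + 1), d i • (u i - e (u i))
            = (x + ∑ i ∈ Finset.range (k + 1), d i • u i)
              - (x + ∑ i ∈ Finset.range (k + 1), d i • e (u i)) := by
          rw [Finset.sum_congr rfl (fun i _ => smul_sub (d i) (u i) (e (u i))),
            Finset.sum_sub_distrib]
          abel
        rw [h4, h2, smul_sub]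
      rw [← h3]
      symm
      apply Finset.sum_eq_single 0
      · intro i hi hne
        rw [hgood i (by omega) (by simpa [Nat.lt_succ_iff] using hi), sub_self, smul_zero]
      · intro h; exact absurd (Finset.mem_range.mpr (by omega)) h
    have hw : u 0 - e (u 0) ≠ 0 := fun h => hbadu (sub_eq_zero.mp h).symm
    by_cases hk : k = 0
    · subst hk
      have hda : d 0 = a := by
        have h4 : (d 0 - a) • (u 0 - e (u 0)) = 0 := by
          rw [sub_smul, sub0, sub_self]
        rcases smul_eq_zero.mp h4 with h | h
        · exact sub_eq_zero.mp h
        · exact absurd h hw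
      have hx0 : x = 0 := by
        have h5 := star
        rw [Finset.range_one, Finset.sum_singleton, hda] at h5
        exact add_eq_right.mp h5
      refine ⟨hx0, ?_⟩
      rw [← hda]
      simp [hd, hx0]
    · have hk1 : 1 ≤ k := by omega
      have hd0 : d 0 = 0 := by
        rw [hgood k hk1 le_rfl, sub_self, smul_zero] at sub0
        rcases smul_eq_zero.mp sub0 with h | h
        · exact h
        · exact absurd h hw
      have eqn : ∀ j, j ≤ k →
          d j + ∑ i ∈ Finset.range (k + 1), d i * ψ j (u i) = a * ψ j (u k) := by
        intro j hj
        have h6 := congrArg (ψ j) star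
        simpa [map_add, map_sum, map_smul, smul_eq_mul, hd] using h6
      have hdj : ∀ j, j ≤ k - 1 → d j = 0 := by
        intro j
        induction j using Nat.strong_induction_on with
        | _ j IHj =>
        intro hj
        rcases Nat.eq_zero_or_pos j with rfl | hjpos
        · exact hd0
        · obtain ⟨m, rfl⟩ : ∃ m, j = m + 1 := ⟨j - 1, by omega⟩
          have heqn := eqn m (by omega)
          rw [hskipψ m k (by omega) le_rfl, mul_zero] at heqn
          have hsum : ∑ i ∈ Finset.range (k + 1), d i * ψ m (u i)
              = d (m + 1) * ψ m (u (m + 1)) := by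
            apply Finset.sum_eq_single (m + 1)
            · intro i hi hne
              rcases lt_or_gt_of_ne hne with hlt | hgt
              · rw [IHj i (by omega) (by omega), zero_mul]
              · rw [hskipψ m i (by omega) (by simpa [Nat.lt_succ_iff] using hi), mul_zero]
            · intro h; exact absurd (Finset.mem_range.mpr (by omega)) h
          rw [hsum, IHj m (by omega) (by omega), zero_add] at heqn
          rcases mul_eq_zero.mp heqn with h | h
          · exact h
          · exact absurd h (hs_ne m (by omega))
      have heqn := eqn (k - 1) (by omega)
      have hsum : ∑ i ∈ Finset.range (k + 1), d i * ψ (k - 1) (u i)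
          = d k * ψ (k - 1) (u k) := by
        apply Finset.sum_eq_single k
        · intro i hi hne
          have hik : i < k + 1 := Finset.mem_range.mp hi
          rw [hdj i (by omega), zero_mul]
        · intro h; exact absurd (Finset.mem_range.mpr (by omega)) h
      rw [hsum, hdj (k - 1) le_rfl, zero_add] at heqn
      have hs := hs_ne (k - 1) (by omega)
      rw [show k - 1 + 1 = k by omega] at hs
      have hka : d k = a := mul_right_cancel₀ hs heqn
      have hstar2 : x + d k • u k = a • u k := by
        rw [← star]
        congr 1
        symm
        apply Finset.sum_eq_single k
        · intro i hi hne
          have hik : i < k + 1 := Finset.mem_range.mp hi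
          rw [hdj i (by omega), zero_smul]
        · intro h; exact absurd (Finset.mem_range.mpr (by omega)) h
      have hx0 : x = 0 := by
        rw [hka] at hstar2
        exact add_eq_right.mp hstar2
      refine ⟨hx0, ?_⟩
      rw [← hka]
      simp [hd, hx0]
  -- T v
  have hTv : T v = ψ k v • u k := by
    rw [hTapp v, hv, zero_add]
    apply Finset.sum_eq_single k
    · intro i hi hne
      have hik : i < k + 1 := Finset.mem_range.mp hi
      rw [hKψ i (by omega) v hv, zero_smul]
    · intro h; exact absurd (Finset.mem_range.mpr (by omega)) h
  have hψkv : ψ k v ≠ 0 := by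
    intro h0
    rw [happ k le_rfl v, h0, zero_smul] at hcv
    exact hcv rfl
  have hukmem : u k ∈ LinearMap.range T :=
    ⟨(ψ k v)⁻¹ • v, by rw [map_smul, hTv, smul_smul, inv_mul_cancel₀ hψkv, one_smul]⟩
  -- injectivity on range e
  have hT'inj : Function.Injective (T ∘ₗ (LinearMap.range e).subtype) := by
    rw [← LinearMap.ker_eq_bot]
    rw [LinearMap.ker_eq_bot']
    intro z hz
    have h7 : T (z : V) = (0 : F) • u k := by
      rw [zero_smul]; exact hz
    have h8 := key (z : V) 0 (hfix _ z.2) h7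
    exact Subtype.ext h8.1
  have hrange_eq : LinearMap.range (T ∘ₗ (LinearMap.range e).subtype)
      = Submodule.map T (LinearMap.range e) := by
    rw [LinearMap.range_comp, Submodule.range_subtype]
  have hfr : finrank F (Submodule.map T (LinearMap.range e)) = finrank F (LinearMap.range e) := by
    rw [← hrange_eq]
    exact LinearMap.finrank_range_of_inj hT'inj
  have huknot : u k ∉ Submodule.map T (LinearMap.range e) := by
    intro hmem
    obtain ⟨x, hx, hTxu⟩ := hmem
    have h9 := key x 1 (hfix x hx) (by rw [one_smul]; exact hTxu)
    exact one_ne_zero h9.2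
  have hlt : Submodule.map T (LinearMap.range e)
      < Submodule.map T (LinearMap.range e) ⊔ (F ∙ u k) := by
    refine lt_of_le_of_ne le_sup_left ?_
    intro hEq
    apply huknot
    rw [hEq]
    exact Submodule.mem_sup_right (Submodule.mem_span_singleton_self (u k))
  have hle : Submodule.map T (LinearMap.range e) ⊔ (F ∙ u k) ≤ LinearMap.range T := by
    apply sup_le
    · rintro y ⟨x, hx, rfl⟩
      exact LinearMap.mem_range_self T x
    · rw [Submodule.span_le, Set.singleton_subset_iff]
      exact hukmem
  have hcontra : finrank F (LinearMap.range e) < finrank F (LinearMap.range T) := by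
    calc finrank F (LinearMap.range e)
        = finrank F (Submodule.map T (LinearMap.range e)) := hfr.symm
      _ < finrank F ↥(Submodule.map T (LinearMap.range e) ⊔ (F ∙ u k)) :=
          Submodule.finrank_lt_finrank_of_lt hlt
      _ ≤ finrank F (LinearMap.range T) := Submodule.finrank_mono hle
  exact absurd (hmax T hTL) (not_le.mpr hcontra)


theorem stmt0 (F V : Type*) [Field F] [AddCommGroup V] [Module F V]
    [FiniteDimensional F V]
    (L : Submodule F (V →ₗ[F] V)) (e : V →ₗ[F] V) (he : e ∈ L)
    (hid : e ∘ₗ e = e)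
    (hmax : ∀ h ∈ L, Module.finrank F (LinearMap.range h) ≤ Module.finrank F (LinearMap.range e))
    (S : Set (V →ₗ[F] V))
    (hS1 : ∀ f ∈ S, Module.finrank F (LinearMap.range f) = 1)
    (hspan : L = Submodule.span F (insert e S)) :
    ∀ hs : List (V →ₗ[F] V), hs ≠ [] → (∀ f ∈ hs, f ∈ L) →
      ∀ v ∈ LinearMap.ker e, hs.prod v ∈ LinearMap.range e := by
  have hSL : S ⊆ (L : Set (V →ₗ[F] V)) := by
    intro f hf
    rw [hspan]
    exact Submodule.subset_span (Set.mem_insert_of_mem e hf)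
  have hNC := no_chain L e he hid hmax S hS1 hSL
  have hfix : ∀ x ∈ LinearMap.range e, e x = x := by
    rintro x ⟨y, rfl⟩
    have := LinearMap.ext_iff.mp hid y
    simpa using this
  set CR : (V →ₗ[F] V) → Prop := fun f => ∃ k : ℕ, ∃ c : ℕ → (V →ₗ[F] V),
    (∀ i ≤ k, c i ∈ S) ∧ (∀ i < k, c i ∘ₗ c (i+1) ≠ 0) ∧
    ¬ (LinearMap.range (c 0) ≤ LinearMap.range e) ∧ c k = f with hCR
  set Y : Submodule F V :=
    LinearMap.range e ⊓ ⨅ (f : V →ₗ[F] V) (_ : CR f), LinearMap.ker f with hY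
  have hYmem : ∀ x, x ∈ Y ↔ x ∈ LinearMap.range e ∧ ∀ f, CR f → f x = 0 := by
    intro x
    rw [hY]
    simp [Submodule.mem_inf, Submodule.mem_iInf, LinearMap.mem_ker]
  -- extension of CR chains
  have hext : ∀ f g, CR f → g ∈ S → f ∘ₗ g ≠ 0 → CR g := by
    rintro f g ⟨k, c, h1, h2, h3, h4⟩ hgS hfg
    refine ⟨k + 1, fun n => if n ≤ k then c n else g, ?_, ?_, ?_, ?_⟩
    · intro i hi
      dsimp only
      by_cases h : i ≤ k
      · rw [if_pos h]; exact h1 i h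
      · rw [if_neg h]; exact hgS
    · intro i hi
      dsimp only
      by_cases h : i + 1 ≤ k
      · rw [if_pos (by omega), if_pos h]; exact h2 i (by omega)
      · have hik : i = k := by omega
        rw [if_pos (by omega), if_neg h, hik, h4]; exact hfg
    · dsimp only
      rw [if_pos (Nat.zero_le k)]; exact h3
    · dsimp only
      rw [if_neg (by omega)]
  -- generators map ker e into Y
  have hb : ∀ g ∈ insert e S, ∀ v : V, e v = 0 → g v ∈ Y := by
    intro g hg v hv
    rcases Set.mem_insert_iff.mp hg with rfl | hgS
    · rw [hv]; exact Y.zero_mem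
    · by_cases hzero : g v = 0
      · rw [hzero]; exact Y.zero_mem
      · rw [hYmem]
        constructor
        · exact hNC 0 (fun _ => g) (fun i _ => hgS)
            (fun i hi => absurd hi (Nat.not_lt_zero i)) v hv hzero ⟨v, rfl⟩
        · intro f hf
          by_contra hne
          have hfg : f ∘ₗ g ≠ 0 := by
            intro h0
            apply hne
            rw [← LinearMap.comp_apply, h0]
            simp
          obtain ⟨k, c, h1, h2, h3, h4⟩ := hext f g hf hgS hfg
          exact h3 (hNC k c h1 h2 v hv (by rw [h4]; exact hzero))
  -- generators preserve Y
  have hcY : ∀ g ∈ insert e S, ∀ x ∈ Y, g x ∈ Y := by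
    intro g hg x hx
    rw [hYmem] at hx
    obtain ⟨hxe, hxf⟩ := hx
    rcases Set.mem_insert_iff.mp hg with rfl | hgS
    · rw [hfix x hxe]
      exact (hYmem x).mpr ⟨hxe, hxf⟩
    · by_cases hzero : g x = 0
      · rw [hzero]; exact Y.zero_mem
      · rw [hYmem]
        constructor
        · by_cases hrg : LinearMap.range g ≤ LinearMap.range e
          · exact hrg ⟨x, rfl⟩
          · exfalso
            apply hzero
            apply hxf g
            exact ⟨0, fun _ => g, fun i _ => hgS,
              fun i hi => absurd hi (Nat.not_lt_zero i), hrg, rfl⟩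
        · intro f hf
          by_cases hfg : f ∘ₗ g = 0
          · rw [← LinearMap.comp_apply, hfg]; simp
          · have hCRg := hext f g hf hgS hfg
            rw [hxf g hCRg]
            exact map_zero f
  -- lift to L
  have hbL : ∀ h ∈ L, ∀ v : V, e v = 0 → h v ∈ Y := by
    intro h hh v hv
    have hsub : L ≤ Y.comap (LinearMap.applyₗ v) := by
      rw [hspan]
      apply Submodule.span_le.mpr
      intro g hg
      simp only [SetLike.mem_coe, Submodule.mem_comap]
      exact hb g hg v hv
    exact hsub hh
  have hcL : ∀ h ∈ L, ∀ x ∈ Y, h x ∈ Y := by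
    intro h hh x hx
    have hsub : L ≤ Y.comap (LinearMap.applyₗ x) := by
      rw [hspan]
      apply Submodule.span_le.mpr
      intro g hg
      simp only [SetLike.mem_coe, Submodule.mem_comap]
      exact hcY g hg x hx
    exact hsub hh
  -- main list induction
  intro hs hne hmem v hv
  have hvK : e v = 0 := LinearMap.mem_ker.mp hv
  have main : ∀ t : List (V →ₗ[F] V), t ≠ [] → (∀ f ∈ t, f ∈ L) → t.prod v ∈ Y := by
    intro t
    induction t with
    | nil => intro h; exact absurd rfl h
    | cons hd tl IHt =>
      intro _ hmem'
      rcases eq_or_ne tl [] with rfl | htl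
      · simp only [List.prod_cons, List.prod_nil, mul_one]
        exact hbL hd (hmem' hd (by simp)) v hvK
      · rw [List.prod_cons]
        have h1 := IHt htl (fun f hf => hmem' f (List.mem_cons_of_mem _ hf))
        have h2 : (hd * tl.prod) v = hd (tl.prod v) := rfl
        rw [h2]
        exact hcL hd (hmem' hd (by simp)) _ h1
  exact ((hYmem _).mp (main hs hne hmem)).1
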